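/- Let D = (N, A) be a DAG and S ⊆ N a dissociation set of Mo(D). Define Q as the set of vertices of N \ S having a descendant in S, and A_Q = A ∩ ((S∪Q)×(S∪Q)). Then ⟨Q, A_Q⟩ is an ancestor tuple for S with |Q| ≤ 2|S|, and A \ A_Q is a suitable arc set for ⟨Q, A_Q⟩. -/

import Mathlib

open scoped Classical

variable {V : Type*}

/-- The arc relation of an arc set. -/
def arcRel (A : Set (V × V)) : V → V → Prop := fun u v => (u, v) ∈ A

/-- `(N, A)` is a directed acyclic graph: no directed cycles. -/
def IsDAG (A : Set (V × V)) : Prop := ∀ v : V, ¬ Relation.TransGen (arcRel A) v v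

/-- Parent set of `v` under arc set `A`. -/
def parents (A : Set (V × V)) (v : V) : Set V := {u | (u, v) ∈ A}

/-- `w` is a descendant of `v`: there is a (nonempty) directed path from `v` to `w`. -/
def Descends (A : Set (V × V)) (v w : V) : Prop := Relation.TransGen (arcRel A) v w

/-- The moralized graph of `(N, A)`: edges between adjacent vertices and
between vertices with a common child. -/
def Mo (A : Set (V × V)) : SimpleGraph V where
  Adj u v := u ≠ v ∧ ((u, v) ∈ A ∨ (v, u) ∈ A ∨ ∃ w, (u, w) ∈ A ∧ (v, w) ∈ A)
  symm := by
    constructor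
    intro u v h
    obtain ⟨hne, h⟩ := h
    refine ⟨hne.symm, ?_⟩
    rcases h with h | h | ⟨w, h1, h2⟩
    · exact Or.inr (Or.inl h)
    · exact Or.inl h
    · exact Or.inr (Or.inr ⟨w, h2, h1⟩)
  loopless := ⟨fun v h => h.1 rfl⟩

/-- `S` is a dissociation set of `G`: `G − S` has maximum degree at most one. -/
def IsDissoc (G : SimpleGraph V) (S : Set V) : Prop :=
  ∀ v ∉ S, {w | w ∉ S ∧ G.Adj v w}.ncard ≤ 1

/-- The set `Q₀` of vertices of `Q` having degree zero outside `S`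
in the moralized graph of `(S ∪ Q, A_Q)`. -/
def Q0set (S Q : Set V) (AQ : Set (V × V)) : Set V :=
  {v ∈ Q | ∀ u ∉ S, ¬ (Mo AQ).Adj v u}

/-- The remaining vertices `R = N \ (S ∪ Q)`. -/
def Rset (S Q : Set V) : Set V := (S ∪ Q)ᶜ

/-- `⟨Q, A_Q⟩` is an ancestor tuple for `S`. -/
def IsAncestorTuple (S Q : Set V) (AQ : Set (V × V)) : Prop :=
  Disjoint Q S ∧ AQ ⊆ (S ∪ Q) ×ˢ (S ∪ Q) ∧ IsDAG AQ ∧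
  (∀ v ∈ Q, ∃ w ∈ S, Descends AQ v w) ∧
  (∀ v ∈ Q, {u | u ∉ S ∧ (Mo AQ).Adj v u}.ncard ≤ 1)

/-- `A_R` is a suitable arc set for the ancestor tuple `⟨Q, A_Q⟩`. -/
def IsSuitable (S Q : Set V) (AQ AR : Set (V × V)) : Prop :=
  AR ⊆ (S ∪ Q0set S Q AQ ∪ Rset S Q) ×ˢ Rset S Q ∧
  (∀ v : V, (v, v) ∉ AR) ∧
  ∀ w ∈ Q0set S Q AQ ∪ Rset S Q,
    {p ∈ AR ∩ ((Rset S Q ∪ Q0set S Q AQ) ×ˢ Rset S Q) | p.1 = w ∨ p.2 = w}.ncard ≤ 1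

section Aux

/-- The ancestor set `Q`. -/
def myQ (A : Set (V × V)) (S : Set V) : Set V := {v | v ∉ S ∧ ∃ w ∈ S, Descends A v w}

/-- The restricted arc set `A_Q`. -/
def myAQ (A : Set (V × V)) (S : Set V) : Set (V × V) :=
  A ∩ ((S ∪ myQ A S) ×ˢ (S ∪ myQ A S))

/-- Near-parents of `s` outside `S`. -/
def Tset (A : Set (V × V)) (S : Set V) (s : V) : Set V :=
  {v | v ∉ S ∧ ((v, s) ∈ A ∨ ∃ u, u ∉ S ∧ (v, u) ∈ A ∧ (u, s) ∈ A)}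

variable {A : Set (V × V)} {S : Set V}

lemma noself (hdag : IsDAG A) (v : V) : (v, v) ∉ A :=
  fun h => hdag v (Relation.TransGen.single h)

lemma arc_ne (hdag : IsDAG A) {u v : V} (h : (u, v) ∈ A) : u ≠ v := by
  rintro rfl; exact noself hdag u h

lemma nbr_unique [Fintype V] (hdis : IsDissoc (Mo A) S) {v w1 w2 : V} (hv : v ∉ S)
    (h1 : w1 ∉ S) (h2 : w2 ∉ S) (a1 : (Mo A).Adj v w1) (a2 : (Mo A).Adj v w2) :
    w1 = w2 := by
  have h := hdis v hv
  rw [Set.ncard_le_one (Set.toFinite _)] at h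
  exact h w1 ⟨h1, a1⟩ w2 ⟨h2, a2⟩

lemma mo_mono {A' : Set (V × V)} (hsub : A' ⊆ A) {u v : V} (h : (Mo A').Adj u v) :
    (Mo A).Adj u v := by
  obtain ⟨hne, h⟩ := h
  refine ⟨hne, ?_⟩
  rcases h with h | h | ⟨w, h1, h2⟩
  · exact Or.inl (hsub h)
  · exact Or.inr (Or.inl (hsub h))
  · exact Or.inr (Or.inr ⟨w, hsub h1, hsub h2⟩)

lemma reachAQ {w : V} (hw : w ∈ S) :
    ∀ {v : V}, Relation.TransGen (arcRel A) v w → v ∉ S →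
      ∃ s ∈ S, Relation.TransGen (arcRel (myAQ A S)) v s := by
  intro v h
  induction h using Relation.TransGen.head_induction_on with
  | single hb =>
    intro hv
    refine ⟨w, hw, Relation.TransGen.single ?_⟩
    exact ⟨hb, Set.mem_prod.2
      ⟨Or.inr ⟨hv, w, hw, Relation.TransGen.single hb⟩, Or.inl hw⟩⟩
  | head h' hcw IH =>
    intro hv
    rename_i a c
    have haQ : a ∈ myQ A S := ⟨hv, w, hw, hcw.head h'⟩
    by_cases hcS : c ∈ S
    · exact ⟨c, hcS, Relation.TransGen.single
        ⟨h', Set.mem_prod.2 ⟨Or.inr haQ, Or.inl hcS⟩⟩⟩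
    · obtain ⟨s, hs, hp⟩ := IH hcS
      have hcQ : c ∈ myQ A S := ⟨hcS, w, hw, hcw⟩
      exact ⟨s, hs, hp.head ⟨h', Set.mem_prod.2 ⟨Or.inr haQ, Or.inr hcQ⟩⟩⟩

lemma mem_T [Fintype V] (hdag : IsDAG A) (hdis : IsDissoc (Mo A) S) {w : V} (hw : w ∈ S) :
    ∀ {v : V}, Relation.TransGen (arcRel A) v w → v ∉ S → ∃ s ∈ S, v ∈ Tset A S s := by
  intro v h
  induction h using Relation.TransGen.head_induction_on with
  | single hb =>
    intro hv
    exact ⟨w, hw, hv, Or.inl hb⟩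
  | head h' hcw IH =>
    intro hv
    rename_i a c
    by_cases hcS : c ∈ S
    · exact ⟨c, hcS, hv, Or.inl h'⟩
    · obtain ⟨s, hs, hcT⟩ := IH hcS
      rcases hcT.2 with hp | ⟨u, huS, hcu, hus⟩
      · exact ⟨s, hs, hv, Or.inr ⟨c, hcS, h', hp⟩⟩
      · exfalso
        have hau : a ≠ u := by
          rintro rfl
          exact hdag a (Relation.TransGen.head h' (Relation.TransGen.single hcu))
        have a1 : (Mo A).Adj c a := ⟨(arc_ne hdag h').symm, Or.inr (Or.inl h')⟩
        have a2 : (Mo A).Adj c u := ⟨arc_ne hdag hcu, Or.inl hcu⟩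
        exact hau (nbr_unique hdis hcS hv huS a1 a2)

lemma core2 [Fintype V] (hdag : IsDAG A) (hdis : IsDissoc (Mo A) S)
    {s u a' z uz : V} (ha'S : a' ∉ S) (hzS : z ∉ S) (huS : u ∉ S) (huzS : uz ∉ S)
    (hus : (u, s) ∈ A) (huzs : (uz, s) ∈ A) (ha'u : (a', u) ∈ A)
    (hz : z = uz ∨ (z, uz) ∈ A) (hza' : z ≠ a') (hzu : z ≠ u) : False := by
  by_cases huz : uz = u
  · subst huz
    rcases hz with rfl | hzarc
    · exact hzu rfl
    · have a1 : (Mo A).Adj uz a' := ⟨(arc_ne hdag ha'u).symm, Or.inr (Or.inl ha'u)⟩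
      have a2 : (Mo A).Adj uz z := ⟨(arc_ne hdag hzarc).symm, Or.inr (Or.inl hzarc)⟩
      exact hza' (nbr_unique hdis huS ha'S hzS a1 a2).symm
  · have a1 : (Mo A).Adj u a' := ⟨(arc_ne hdag ha'u).symm, Or.inr (Or.inl ha'u)⟩
    have a2 : (Mo A).Adj u uz :=
      ⟨fun e => huz e.symm, Or.inr (Or.inr ⟨s, hus, huzs⟩)⟩
    have he : a' = uz := nbr_unique hdis huS ha'S huzS a1 a2
    subst he
    rcases hz with rfl | hzarc
    · exact hza' rfl
    · have b1 : (Mo A).Adj a' z := ⟨Ne.symm hza', Or.inr (Or.inl hzarc)⟩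
      have b2 : (Mo A).Adj a' u := ⟨arc_ne hdag ha'u, Or.inl ha'u⟩
      exact hzu (nbr_unique hdis ha'S hzS huS b1 b2)

lemma core [Fintype V] (hdag : IsDAG A) (hdis : IsDissoc (Mo A) S)
    {s x y z u uz : V} (hxy : x ≠ y) (hxz : x ≠ z) (hyz : y ≠ z)
    (hxS : x ∉ S) (hyS : y ∉ S) (hzS : z ∉ S) (huS : u ∉ S) (huzS : uz ∉ S)
    (hus : (u, s) ∈ A) (huzs : (uz, s) ∈ A)
    (hx : x = u ∨ (x, u) ∈ A) (hy : y = u ∨ (y, u) ∈ A)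
    (hz : z = uz ∨ (z, uz) ∈ A) : False := by
  rcases hx with rfl | hxu
  · rcases hy with rfl | hyu
    · exact hxy rfl
    · exact core2 hdag hdis hyS hzS huS huzS hus huzs hyu hz (Ne.symm hyz) (Ne.symm hxz)
  · rcases hy with rfl | hyu
    · exact core2 hdag hdis hxS hzS huS huzS hus huzs hxu hz (Ne.symm hxz) (Ne.symm hyz)
    · have a1 : (Mo A).Adj u x := ⟨(arc_ne hdag hxu).symm, Or.inr (Or.inl hxu)⟩
      have a2 : (Mo A).Adj u y := ⟨(arc_ne hdag hyu).symm, Or.inr (Or.inl hyu)⟩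
      exact hxy (nbr_unique hdis huS hxS hyS a1 a2)

lemma Tlink {s v : V} (hv : v ∈ Tset A S s) :
    ∃ u, u ∉ S ∧ (u, s) ∈ A ∧ (v = u ∨ (v, u) ∈ A) := by
  obtain ⟨hvS, hp | ⟨u, h1, h2, h3⟩⟩ := hv
  · exact ⟨v, hvS, hp, Or.inl rfl⟩
  · exact ⟨u, h1, h3, Or.inr h2⟩

lemma Tcard [Fintype V] (hdag : IsDAG A) (hdis : IsDissoc (Mo A) S) (s : V) :
    (Tset A S s).ncard ≤ 2 := by
  by_contra h
  push_neg at h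
  obtain ⟨a, ha, b, hb, c, hc, hab, hac, hbc⟩ :=
    (Set.two_lt_ncard (Set.toFinite _)).1 h
  obtain ⟨ua, huaS, huas, hla⟩ := Tlink ha
  obtain ⟨ub, hubS, hubs, hlb⟩ := Tlink hb
  obtain ⟨uc, hucS, hucs, hlc⟩ := Tlink hc
  have haS := ha.1
  have hbS := hb.1
  have hcS := hc.1
  by_cases e1 : ua = ub
  · subst e1
    exact core hdag hdis hab hac hbc haS hbS hcS huaS hucS huas hucs hla hlb hlc
  · by_cases e2 : ua = uc
    · subst e2
      exact core hdag hdis hac hab (Ne.symm hbc) haS hcS hbS huaS hubS huas hubs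
        hla hlc hlb
    · by_cases e3 : ub = uc
      · subst e3
        exact core hdag hdis hbc (Ne.symm hab) (Ne.symm hac) hbS hcS haS hubS huaS
          hubs huas hlb hlc hla
      · have a1 : (Mo A).Adj ua ub := ⟨e1, Or.inr (Or.inr ⟨s, huas, hubs⟩)⟩
        have a2 : (Mo A).Adj ua uc := ⟨e2, Or.inr (Or.inr ⟨s, huas, hucs⟩)⟩
        exact e3 (nbr_unique hdis huaS hubS hucS a1 a2)

end Aux

/-- Every DAG whose moralized graph has dissociation set `S` decomposes into an
ancestor tuple for `S` (with `|Q| ≤ 2|S|`) and a suitable arc set. -/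
theorem stmt_7 [Fintype V] (A : Set (V × V)) (S : Set V)
    (hdag : IsDAG A) (hdis : IsDissoc (Mo A) S) :
    IsAncestorTuple S {v | v ∉ S ∧ ∃ w ∈ S, Descends A v w}
        (A ∩ ((S ∪ {v | v ∉ S ∧ ∃ w ∈ S, Descends A v w}) ×ˢ
              (S ∪ {v | v ∉ S ∧ ∃ w ∈ S, Descends A v w}))) ∧
    {v | v ∉ S ∧ ∃ w ∈ S, Descends A v w}.ncard ≤ 2 * S.ncard ∧
    IsSuitable S {v | v ∉ S ∧ ∃ w ∈ S, Descends A v w}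
        (A ∩ ((S ∪ {v | v ∉ S ∧ ∃ w ∈ S, Descends A v w}) ×ˢ
              (S ∪ {v | v ∉ S ∧ ∃ w ∈ S, Descends A v w})))
        (A \ (A ∩ ((S ∪ {v | v ∉ S ∧ ∃ w ∈ S, Descends A v w}) ×ˢ
              (S ∪ {v | v ∉ S ∧ ∃ w ∈ S, Descends A v w})))) := by
  classical
  have main : IsAncestorTuple S (myQ A S) (myAQ A S) ∧
      (myQ A S).ncard ≤ 2 * S.ncard ∧
      IsSuitable S (myQ A S) (myAQ A S) (A \ myAQ A S) := by
    refine ⟨⟨?_, Set.inter_subset_right, ?_, ?_, ?_⟩, ?_, ?_, ?_, ?_⟩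
    · -- Disjoint Q S
      exact Set.disjoint_left.2 fun v hv hvS => hv.1 hvS
    · -- IsDAG AQ
      intro v hv
      exact hdag v (Relation.TransGen.mono (fun a b h => h.1) _ _ hv)
    · -- descends within AQ
      rintro v ⟨hvS, w, hw, hd⟩
      exact reachAQ hw hd hvS
    · -- degree bound in Mo AQ
      intro v hv
      refine le_trans (Set.ncard_le_ncard ?_ (Set.toFinite _)) (hdis v hv.1)
      rintro u ⟨huS, hadj⟩
      exact ⟨huS, mo_mono Set.inter_subset_left hadj⟩
    · -- cardinality bound
      have hsub : myQ A S ⊆ ⋃ s ∈ S, Tset A S s := by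
        rintro v ⟨hvS, w, hw, hd⟩
        obtain ⟨s, hs, hT⟩ := mem_T hdag hdis hw hd hvS
        exact Set.mem_biUnion hs hT
      have hbU : (⋃ s ∈ S, Tset A S s) =
          ↑((Set.toFinite S).toFinset.biUnion fun s =>
            (Set.toFinite (Tset A S s)).toFinset) := by
        ext v
        constructor
        · intro hv
          obtain ⟨s, hs, hT⟩ := Set.mem_iUnion₂.1 hv
          exact Finset.mem_coe.2 (Finset.mem_biUnion.2
            ⟨s, (Set.toFinite S).mem_toFinset.2 hs, (Set.toFinite _).mem_toFinset.2 hT⟩)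
        · intro hv
          obtain ⟨s, hs, hT⟩ := Finset.mem_biUnion.1 (Finset.mem_coe.1 hv)
          exact Set.mem_biUnion ((Set.toFinite S).mem_toFinset.1 hs)
            ((Set.toFinite _).mem_toFinset.1 hT)
      calc (myQ A S).ncard ≤ (⋃ s ∈ S, Tset A S s).ncard :=
            Set.ncard_le_ncard hsub (Set.toFinite _)
        _ = ((Set.toFinite S).toFinset.biUnion fun s =>
              (Set.toFinite (Tset A S s)).toFinset).card := by
            rw [hbU, Set.ncard_coe_finset]
        _ ≤ ∑ s ∈ (Set.toFinite S).toFinset,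
              ((Set.toFinite (Tset A S s)).toFinset).card := Finset.card_biUnion_le
        _ ≤ ∑ s ∈ (Set.toFinite S).toFinset, 2 := by
            refine Finset.sum_le_sum fun s _ => ?_
            rw [← Set.ncard_eq_toFinset_card]
            exact Tcard hdag hdis s
        _ = 2 * S.ncard := by
            rw [Finset.sum_const, smul_eq_mul, Set.ncard_eq_toFinset_card S, mul_comm]
    · -- suitable: subset condition
      rintro ⟨u, v⟩ ⟨hA, hn⟩
      have hprod : (u, v) ∉ (S ∪ myQ A S) ×ˢ (S ∪ myQ A S) := fun hp => hn ⟨hA, hp⟩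
      have hvR : v ∉ S ∪ myQ A S := by
        intro hvm
        have huR : u ∉ S ∪ myQ A S := fun hum => hprod (Set.mem_prod.2 ⟨hum, hvm⟩)
        have huS : u ∉ S := fun h => huR (Or.inl h)
        rcases hvm with hvS | hvQ
        · exact huR (Or.inr ⟨huS, v, hvS, Relation.TransGen.single hA⟩)
        · obtain ⟨_, w, hw, hd⟩ := hvQ
          exact huR (Or.inr ⟨huS, w, hw, hd.head hA⟩)
      refine Set.mem_prod.2 ⟨?_, Set.mem_compl hvR⟩
      by_cases huS : u ∈ S
      · exact Or.inl (Or.inl huS)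
      by_cases huQ : u ∈ myQ A S
      · refine Or.inl (Or.inr ⟨huQ, ?_⟩)
        intro x hxS hadj
        have hxSQ : x ∈ S ∪ myQ A S := by
          obtain ⟨hne, hh⟩ := hadj
          rcases hh with h | h | ⟨w', h1, h2⟩
          · exact (Set.mem_prod.1 h.2).2
          · exact (Set.mem_prod.1 h.2).1
          · exact (Set.mem_prod.1 h2.2).1
        have hxv : x ≠ v := fun e => hvR (e ▸ hxSQ)
        have b1 : (Mo A).Adj u x := mo_mono Set.inter_subset_left hadj
        have b2 : (Mo A).Adj u v := ⟨arc_ne hdag hA, Or.inl hA⟩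
        have hvS : v ∉ S := fun h => hvR (Or.inl h)
        exact hxv (nbr_unique hdis huS hxS hvS b1 b2)
      · refine Or.inr (Set.mem_compl ?_)
        intro h
        rcases h with h | h
        · exact huS h
        · exact huQ h
    · -- no self-loops
      intro v h
      exact noself hdag v h.1
    · -- degree-one condition on AR
      intro w hw
      have hwS : w ∉ S := by
        rcases hw with hw | hw
        · exact hw.1.1
        · exact fun h => hw (Or.inl h)
      rw [Set.ncard_le_one (Set.toFinite _)]
      rintro ⟨a, b⟩ ⟨⟨⟨haA, -⟩, hab⟩, hw1⟩ ⟨c, d⟩ ⟨⟨⟨hcA, -⟩, hcd⟩, hw2⟩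
      obtain ⟨ha1, hb1⟩ := Set.mem_prod.1 hab
      obtain ⟨hc1, hd1⟩ := Set.mem_prod.1 hcd
      have haS : a ∉ S := by
        rcases ha1 with h | h
        · exact fun hs => h (Or.inl hs)
        · exact h.1.1
      have hcS : c ∉ S := by
        rcases hc1 with h | h
        · exact fun hs => h (Or.inl hs)
        · exact h.1.1
      have hbS : b ∉ S := fun hs => hb1 (Or.inl hs)
      have hdS : d ∉ S := fun hs => hd1 (Or.inl hs)
      simp only [Prod.mk.injEq]
      rcases hw1 with h1 | h1 <;> rcases hw2 with h2 | h2
      · -- a = w, c = w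
        have hwb : ((w, b) : V × V) ∈ A := h1 ▸ haA
        have hwd : ((w, d) : V × V) ∈ A := h2 ▸ hcA
        have b1 : (Mo A).Adj w b := ⟨arc_ne hdag hwb, Or.inl hwb⟩
        have b2 : (Mo A).Adj w d := ⟨arc_ne hdag hwd, Or.inl hwd⟩
        exact ⟨h1.trans h2.symm, nbr_unique hdis hwS hbS hdS b1 b2⟩
      · -- a = w, d = w : cycle
        have hwb : ((w, b) : V × V) ∈ A := h1 ▸ haA
        have hcw : ((c, w) : V × V) ∈ A := h2 ▸ hcA
        have b1 : (Mo A).Adj w b := ⟨arc_ne hdag hwb, Or.inl hwb⟩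
        have b2 : (Mo A).Adj w c := ⟨(arc_ne hdag hcw).symm, Or.inr (Or.inl hcw)⟩
        have hbc : b = c := nbr_unique hdis hwS hbS hcS b1 b2
        have hbw : ((b, w) : V × V) ∈ A := by rw [hbc]; exact hcw
        exact absurd (Relation.TransGen.head hwb (Relation.TransGen.single hbw)) (hdag w)
      · -- b = w, c = w : cycle
        have haw : ((a, w) : V × V) ∈ A := h1 ▸ haA
        have hwd : ((w, d) : V × V) ∈ A := h2 ▸ hcA
        have b1 : (Mo A).Adj w a := ⟨(arc_ne hdag haw).symm, Or.inr (Or.inl haw)⟩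
        have b2 : (Mo A).Adj w d := ⟨arc_ne hdag hwd, Or.inl hwd⟩
        have had : a = d := nbr_unique hdis hwS haS hdS b1 b2
        have hwa : ((w, a) : V × V) ∈ A := by rw [had]; exact hwd
        exact absurd (Relation.TransGen.head haw (Relation.TransGen.single hwa)) (hdag a)
      · -- b = w, d = w
        have haw : ((a, w) : V × V) ∈ A := h1 ▸ haA
        have hcw : ((c, w) : V × V) ∈ A := h2 ▸ hcA
        have b1 : (Mo A).Adj w a := ⟨(arc_ne hdag haw).symm, Or.inr (Or.inl haw)⟩
        have b2 : (Mo A).Adj w c := ⟨(arc_ne hdag hcw).symm, Or.inr (Or.inl hcw)⟩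
        exact ⟨nbr_unique hdis hwS haS hcS b1 b2, h1.trans h2.symm⟩
  exact main
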